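/- Every p-subgroup Q of a finite group G is contained in a p-radical subgroup R_Q of G, obtained as the eventually constant term of the chain P_0 = Q, P_{i+1} = O_p(N_G(P_i)); moreover N_G(Q) ≤ N_G(R_Q). -/

import Mathlib

open Subgroup

noncomputable section

/-- The `p`-core `O_p(G)`: the largest normal `p`-subgroup of `G`
(defined as the join of all normal `p`-subgroups). -/
def pCore (p : ℕ) (G : Type*) [Group G] : Subgroup G :=
  ⨆ P ∈ {P : Subgroup G | P.Normal ∧ IsPGroup p ↥P}, P

/-- A group has characteristic `p` if `C_G(O_p(G)) ≤ O_p(G)`. -/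
def CharacteristicP (p : ℕ) (G : Type*) [Group G] : Prop :=
  Subgroup.centralizer ((pCore p G : Subgroup G) : Set G) ≤ pCore p G

/-- `G` has local characteristic `p` if the normalizer of every nontrivial
`p`-subgroup has characteristic `p`. -/
def LocalCharacteristicP (p : ℕ) (G : Type*) [Group G] : Prop :=
  ∀ Q : Subgroup G, Q ≠ ⊥ → IsPGroup p ↥Q → CharacteristicP p ↥(normalizer (Q : Set G))

/-- `G` has parabolic characteristic `p` if every `p`-local subgroup containing
a Sylow `p`-subgroup has characteristic `p`. -/
def ParabolicCharacteristicP (p : ℕ) (G : Type*) [Group G] : Prop :=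
  ∀ Q : Subgroup G, Q ≠ ⊥ → IsPGroup p ↥Q →
    (∃ S : Sylow p G, (S : Subgroup G) ≤ normalizer (Q : Set G)) → CharacteristicP p ↥(normalizer (Q : Set G))

/-- A `p`-subgroup `R` is `p`-radical if `R = O_p(N_G(R))`. -/
def IsRadicalPSubgroup (p : ℕ) {G : Type*} [Group G] (R : Subgroup G) : Prop :=
  IsPGroup p ↥R ∧ (pCore p ↥(normalizer (R : Set G))).map (normalizer (R : Set G)).subtype = R

/-- A `p`-subgroup `R` is `p`-centric if `Z(R) = R ⊓ C_G(R)` is a Sylow `p`-subgroup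
of `C_G(R)` (equivalently, in a finite group, a maximal `p`-subgroup of `C_G(R)`). -/
def IsPCentric (p : ℕ) {G : Type*} [Group G] (R : Subgroup G) : Prop :=
  IsPGroup p ↥R ∧
    IsPGroup p ↥(R ⊓ Subgroup.centralizer (R : Set G)) ∧
    ∀ Q : Subgroup G, Q ≤ Subgroup.centralizer (R : Set G) → IsPGroup p ↥Q →
      R ⊓ Subgroup.centralizer (R : Set G) ≤ Q → Q = R ⊓ Subgroup.centralizer (R : Set G)

/-- An element of order `p` is `p`-central if it lies in the center of some
Sylow `p`-subgroup of `G`. -/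
def IsPCentralElement (p : ℕ) {G : Type*} [Group G] (x : G) : Prop :=
  orderOf x = p ∧ ∃ S : Sylow p G, x ∈ (S : Subgroup G) ∧ ∀ y ∈ (S : Subgroup G), x * y = y * x

/-- A `p`-subgroup is purely noncentral if it contains no `p`-central element of `G`. -/
def PurelyNoncentral (p : ℕ) {G : Type*} [Group G] (P : Subgroup G) : Prop :=
  ∀ x ∈ P, ¬ IsPCentralElement p x

/-- Conjugation action of `g` on the group algebra. -/
def conjA {k : Type*} [Semiring k] {G : Type*} [Group G] (g : G) (x : MonoidAlgebra k G) :
    MonoidAlgebra k G :=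
  MonoidAlgebra.single g 1 * x * MonoidAlgebra.single g⁻¹ 1

/-- The relative trace map `Tr_H^G` on the group algebra (summing conjugates over
a set of coset representatives of `H`). -/
def relTr {k : Type*} [Semiring k] {G : Type*} [Group G] (H : Subgroup G)
    (x : MonoidAlgebra k G) : MonoidAlgebra k G :=
  ∑ᶠ q : G ⧸ H, conjA (Quotient.out q) x

/-- A block (idempotent) of `kG`: a primitive central idempotent. -/
def IsBlockOf (k : Type*) [Semiring k] (G : Type*) [Group G] (e : MonoidAlgebra k G) : Prop :=
  e ≠ 0 ∧ e * e = e ∧ (∀ x, e * x = x * e) ∧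
    ∀ f g : MonoidAlgebra k G, (∀ x, f * x = x * f) → (∀ x, g * x = x * g) →
      f * f = f → g * g = g → f * g = 0 → f + g = e → f = 0 ∨ g = 0

/-- `D` is a defect group of the block `e`: `D` is a `p`-subgroup, minimal with the
property that `e` lies in the image of the relative trace map `Tr_D^G` on `D`-fixed points. -/
def IsDefectGroupOf (p : ℕ) (k : Type*) [Semiring k] (G : Type*) [Group G]
    (D : Subgroup G) (e : MonoidAlgebra k G) : Prop :=
  IsPGroup p ↥D ∧
    (∃ x, (∀ h ∈ D, conjA h x = x) ∧ relTr D x = e) ∧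
    ∀ Q : Subgroup G, Q ≤ D → (∃ x, (∀ h ∈ Q, conjA h x = x) ∧ relTr Q x = e) → Q = D

/-- The augmentation map on the group algebra; a block is principal iff its
augmentation is nonzero. -/
def augm {k : Type*} [Semiring k] {G : Type*} [Group G] (x : MonoidAlgebra k G) : k :=
  Finsupp.sum x.coeff fun _ a => a

/-- `E` is subnormal in `G`. -/
def SubnormalIn {G : Type*} [Group G] (E : Subgroup G) : Prop :=
  ∃ (n : ℕ) (f : ℕ → Subgroup G), f 0 = E ∧ f n = ⊤ ∧
    ∀ i < n, f i ≤ f (i + 1) ∧ ((f i).subgroupOf (f (i + 1))).Normal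

/-- A quasisimple group: perfect with simple central quotient. -/
def IsQuasisimpleGroup (H : Type*) [Group H] : Prop :=
  commutator H = ⊤ ∧ IsSimpleGroup (H ⧸ Subgroup.center H)

/-- A component of `G`: a subnormal quasisimple subgroup. -/
def IsComponentOf {G : Type*} [Group G] (E : Subgroup G) : Prop :=
  SubnormalIn E ∧ IsQuasisimpleGroup ↥E

/-- The Fitting subgroup: the join of all nilpotent normal subgroups. -/
def fittingSubgroup (G : Type*) [Group G] : Subgroup G :=
  ⨆ P ∈ {P : Subgroup G | P.Normal ∧ Group.IsNilpotent ↥P}, P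

/-- The generalized Fitting subgroup `F*(G) = F(G)E(G)`. -/
def generalizedFitting (G : Type*) [Group G] : Subgroup G :=
  fittingSubgroup G ⊔ ⨆ E ∈ {E : Subgroup G | IsComponentOf E}, E

section AuxPCore

variable {G : Type*} [Group G] {p : ℕ} [Fact p.Prime]

lemma pCore_normal_isPGroup [Finite G] :
    (pCore p G).Normal ∧ IsPGroup p ↥(pCore p G) := by
  have : pCore p G = sSup {P : Subgroup G | P.Normal ∧ IsPGroup p ↥P} := by
    rw [sSup_eq_iSup]; rfl
  rw [this]
  have hfin : {P : Subgroup G | P.Normal ∧ IsPGroup p ↥P}.Finite := Set.toFinite _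
  refine Set.Finite.induction_on
    (motive := fun s _ => s ⊆ {P : Subgroup G | P.Normal ∧ IsPGroup p ↥P} →
      (sSup s).Normal ∧ IsPGroup p ↥(sSup s)) _ hfin ?_ ?_ (le_refl _)
  · intro _
    rw [sSup_empty]
    exact ⟨inferInstance, IsPGroup.of_bot⟩
  · intro a s _ _ ih hsub
    have ha := hsub (Set.mem_insert a s)
    obtain ⟨hN, hP⟩ := ih (fun x hx => hsub (Set.mem_insert_of_mem a hx))
    rw [sSup_insert]
    haveI := ha.1
    haveI := hN
    exact ⟨Subgroup.sup_normal a (sSup s), ha.2.to_sup_of_normal_right hP⟩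

lemma le_pCore {P : Subgroup G} (h1 : P.Normal) (h2 : IsPGroup p ↥P) :
    P ≤ pCore p G :=
  le_iSup₂ (f := fun P _ => P) P ⟨h1, h2⟩

/-- `O_p(N_G(K))` viewed as a subgroup of `G`. -/
def OpN (p : ℕ) {G : Type*} [Group G] (K : Subgroup G) : Subgroup G :=
  (pCore p ↥(normalizer (K : Set G))).map (normalizer (K : Set G)).subtype

lemma OpN_isPGroup [Finite G] (K : Subgroup G) : IsPGroup p ↥(OpN p K) :=
  (pCore_normal_isPGroup.2).map _

lemma le_OpN [Finite G] {K : Subgroup G} (hK : IsPGroup p ↥K) : K ≤ OpN p K := by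
  have h1 : (K.subgroupOf (normalizer (K : Set G))) ≤ pCore p ↥(normalizer (K : Set G)) :=
    le_pCore Subgroup.normal_in_normalizer
      (hK.of_equiv (Subgroup.subgroupOfEquivOfLe Subgroup.le_normalizer).symm)
  have h2 : (K.subgroupOf (normalizer (K : Set G))).map (normalizer (K : Set G)).subtype = K := by
    rw [Subgroup.subgroupOf_map_subtype, inf_eq_left]
    exact Subgroup.le_normalizer
  calc K = (K.subgroupOf (normalizer (K : Set G))).map (normalizer (K : Set G)).subtype := h2.symm
    _ ≤ OpN p K := Subgroup.map_mono h1

lemma normalizer_le_normalizer_OpN [Finite G] (K : Subgroup G) :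
    (normalizer (K : Set G)) ≤ (normalizer (OpN p K : Set G)) := by
  intro g hg
  have hnorm : (pCore p ↥(normalizer (K : Set G))).Normal := pCore_normal_isPGroup.1
  rw [Subgroup.mem_normalizer_iff]
  intro x
  constructor
  · rintro ⟨y, hy, rfl⟩
    exact ⟨⟨g, hg⟩ * y * ⟨g, hg⟩⁻¹, hnorm.conj_mem y hy ⟨g, hg⟩, rfl⟩
  · rintro ⟨y, hy, hxy⟩
    have : x = g⁻¹ * (g * x * g⁻¹) * g := by group
    rw [this, ← hxy]
    exact ⟨⟨g, hg⟩⁻¹ * y * (⟨g, hg⟩⁻¹)⁻¹,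
      hnorm.conj_mem y hy ⟨g, hg⟩⁻¹, by simp⟩

end AuxPCore

theorem stmt3 {G : Type*} [Group G] [Finite G] (p : ℕ) [Fact p.Prime]
    (Q : Subgroup G) (hQ : IsPGroup p ↥Q)
    (F : ℕ → Subgroup G) (hF0 : F 0 = Q)
    (hFs : ∀ n, F (n + 1) = (pCore p ↥(normalizer (F n : Set G))).map (normalizer (F n : Set G)).subtype) :
    ∃ N, (∀ m, N ≤ m → F m = F N) ∧ IsRadicalPSubgroup p (F N) ∧ Q ≤ F N ∧
      normalizer (Q : Set G) ≤ normalizer (F N : Set G) := by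
  have hOp : ∀ n, F (n + 1) = OpN p (F n) := hFs
  have hpg : ∀ n, IsPGroup p ↥(F n) := by
    intro n
    induction n with
    | zero => rw [hF0]; exact hQ
    | succ n ih => rw [hOp n]; exact OpN_isPGroup _
  have hmono : ∀ n, F n ≤ F (n + 1) := fun n => (hOp n) ▸ le_OpN (hpg n)
  have hmono' : Monotone F := monotone_nat_of_le_succ hmono
  have hnorm : ∀ n, (normalizer (F n : Set G)) ≤ (normalizer (F (n + 1) : Set G)) :=
    fun n => (hOp n) ▸ normalizer_le_normalizer_OpN (F n)
  have hnorm' : ∀ n, (normalizer (Q : Set G)) ≤ (normalizer (F n : Set G)) := by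
    intro n
    induction n with
    | zero => rw [hF0]
    | succ n ih => exact ih.trans (hnorm n)
  obtain ⟨N, hN⟩ : ∃ N, F (N + 1) = F N := by
    by_contra h
    push_neg at h
    have hsm : StrictMono F :=
      strictMono_nat_of_lt_succ fun n => (hmono n).lt_of_ne (h n).symm
    obtain ⟨m, n, hmn, he⟩ := Finite.exists_ne_map_eq_of_infinite F
    exact hmn (hsm.injective he)
  have hstab : ∀ m, N ≤ m → F m = F N := by
    intro m hm
    induction m, hm using Nat.le_induction with
    | base => rfl
    | succ m hm ih => rw [hOp m, ih, ← hOp N, hN]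
  refine ⟨N, hstab, ⟨hpg N, ?_⟩, hF0 ▸ hmono' (Nat.zero_le N), hnorm' N⟩
  rw [← hFs N]
  exact hN
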